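/- Let ε > 0, δ ∈ (0,1), n₁ = 1 + ⌊(1/ε)·ln((e^ε + 2δ − 1)/((e^ε + 1)δ))⌋, and n₂ = n₁ + ⌊(1/ε)·ln(1 + ((e^ε − 1)/δ)·(1 − π₀(n₁)))⌋, where π₀ is defined by π₀(0) = 0 and π₀(n+1) = min(e^ε·π₀(n) + δ, 1 − e^{−ε}·(1 − π₀(n) − δ), 1). Then for all n with n₁ ≤ n ≤ n₂, writing m = n − n₁, π₀(n) = (1 − e^{−mε})·(1 + δ/(e^ε − 1)) + e^{−mε}·π₀(n₁). -/

import Mathlib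

open Real

set_option maxHeartbeats 1000000 in
theorem pi_opt_closed_form_second_phase
    (ε δ : ℝ) (hε : 0 < ε) (hδ0 : 0 < δ) (hδ1 : δ < 1)
    (π₀ : ℕ → ℝ) (h0 : π₀ 0 = 0)
    (hrec : ∀ n, π₀ (n + 1) =
      min (min (exp ε * π₀ n + δ) (1 - exp (-ε) * (1 - π₀ n - δ))) 1)
    (n₁ n₂ : ℕ)
    (hn₁ : (n₁ : ℤ) = 1 + ⌊(1 / ε) * Real.log ((exp ε + 2 * δ - 1) / ((exp ε + 1) * δ))⌋)
    (hn₂ : (n₂ : ℤ) = (n₁ : ℤ) +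
      ⌊(1 / ε) * Real.log (1 + ((exp ε - 1) / δ) * (1 - π₀ n₁))⌋) :
    ∀ n : ℕ, n₁ ≤ n → n ≤ n₂ →
      π₀ n = (1 - exp (-((n - n₁ : ℕ) : ℝ) * ε)) * (1 + δ / (exp ε - 1)) +
        exp (-((n - n₁ : ℕ) : ℝ) * ε) * π₀ n₁ := by
  have hE1 : 1 < exp ε := by nlinarith [Real.add_one_le_exp ε]
  have hE0 : (0:ℝ) < exp ε := exp_pos ε
  have hEm1 : (0:ℝ) < exp ε - 1 := by linarith
  have hEinv : exp (-ε) * exp ε = 1 := by rw [← exp_add]; simp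
  set E := exp ε with hEdef
  set R := (E + 2 * δ - 1) / ((E + 1) * δ) with hRdef
  set T := (1 / ε) * Real.log R with hTdef
  have hRnum : 0 < E + 2 * δ - 1 := by linarith
  have hRden : 0 < (E + 1) * δ := by positivity
  have hRpos : 0 < R := div_pos hRnum hRden
  have hR1 : 1 ≤ R := by
    rw [le_div_iff₀ hRden]; nlinarith
  have hT0 : 0 ≤ T := by
    have : 0 ≤ Real.log R := Real.log_nonneg hR1
    positivity
  -- phase 1 closed form
  have phase1 : ∀ k : ℕ, k ≤ n₁ → π₀ k = δ * (exp (k * ε) - 1) / (E - 1) := by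
    intro k hk
    induction k with
    | zero => simp [h0]
    | succ k ih =>
      have hx := ih (Nat.le_of_succ_le hk)
      have hkZ : (k : ℤ) ≤ ⌊T⌋ := by omega
      have hkT : (k : ℝ) ≤ T := by
        calc (k : ℝ) ≤ (⌊T⌋ : ℝ) := by exact_mod_cast hkZ
        _ ≤ T := Int.floor_le T
      have hklog : (k : ℝ) * ε ≤ Real.log R := by
        have h := mul_le_mul_of_nonneg_right hkT hε.le
        have he : T * ε = Real.log R := by rw [hTdef]; field_simp
        linarith
      have hexpk : exp ((k : ℝ) * ε) ≤ R := by
        rw [← Real.exp_log hRpos]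
        exact exp_le_exp.mpr hklog
      have hexpk' : exp ((k : ℝ) * ε) * ((E + 1) * δ) ≤ E + 2 * δ - 1 :=
        (le_div_iff₀ hRden).mp hexpk
      have hek1 : (1:ℝ) ≤ exp ((k : ℝ) * ε) := by
        rw [← Real.exp_zero]; exact exp_le_exp.mpr (by positivity)
      have hx0 : 0 ≤ π₀ k := by
        have h1 : 0 ≤ exp ((k:ℝ) * ε) - 1 := by linarith
        rw [hx]; positivity
      have hxτ : π₀ k * (E + 1) ≤ 1 - δ := by
        rw [hx]
        rw [div_mul_eq_mul_div, div_le_iff₀ hEm1]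
        nlinarith
      -- A is the min
      have hA1 : E * π₀ k + δ ≤ 1 := by nlinarith
      have hAB : E * π₀ k + δ ≤ 1 - exp (-ε) * (1 - π₀ k - δ) := by
        nlinarith [exp_pos (-ε)]
      rw [hrec k, min_eq_left hAB, min_eq_left hA1, hx]
      have : exp (((k:ℕ)+1 : ℕ) * ε) = exp ((k:ℝ) * ε) * E := by
        rw [hEdef, ← exp_add]; push_cast; ring_nf
      push_cast
      rw [show ((k:ℝ)+1) * ε = (k:ℝ)*ε + ε by ring, exp_add, ← hEdef]
      field_simp
      ring
  -- facts about π₀ n₁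
  set p := π₀ n₁ with hpdef
  have hpform : p = δ * (exp (n₁ * ε) - 1) / (E - 1) := phase1 n₁ le_rfl
  have hn₁T : T < (n₁ : ℝ) := by
    have h1 : T < (⌊T⌋ : ℝ) + 1 := Int.lt_floor_add_one T
    have h2 : ((⌊T⌋ : ℝ) + 1) = ((n₁ : ℤ) : ℝ) := by rw [hn₁]; push_cast; ring
    rw [h2] at h1; exact_mod_cast h1
  have hn₁log : Real.log R ≤ (n₁ : ℝ) * ε := by
    have h := mul_le_mul_of_nonneg_right hn₁T.le hε.le
    have he : T * ε = Real.log R := by rw [hTdef]; field_simp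
    linarith
  have hexpn₁ : R ≤ exp ((n₁ : ℝ) * ε) := by
    rw [← Real.exp_log hRpos]
    exact exp_le_exp.mpr hn₁log
  have hexpn₁' : E + 2 * δ - 1 ≤ exp ((n₁ : ℝ) * ε) * ((E + 1) * δ) := by
    rw [div_le_iff₀ hRden] at hexpn₁; linarith
  have hpτ : 1 - δ ≤ p * (E + 1) := by
    rw [hpform, div_mul_eq_mul_div, le_div_iff₀ hEm1]
    nlinarith
  have hp0 : 0 ≤ p := by
    have : (1:ℝ) ≤ exp ((n₁:ℝ) * ε) := by
      rw [← Real.exp_zero]; exact exp_le_exp.mpr (by positivity)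
    have h1 : 0 ≤ exp ((n₁:ℝ) * ε) - 1 := by linarith
    rw [hpform]; positivity
  have hn₁pos : 1 ≤ n₁ := by
    have : (0:ℤ) ≤ ⌊T⌋ := Int.le_floor.mpr (by simpa using hT0)
    omega
  have hp1 : p ≤ 1 := by
    obtain ⟨k, hk⟩ := Nat.exists_eq_add_of_le hn₁pos
    rw [hpdef, hk, show 1 + k = k + 1 by ring, hrec k]
    exact min_le_right _ _
  -- phase 2 setup
  set L := 1 + δ / (E - 1) with hLdef
  have hL1 : 1 < L := by
    have h1 : 0 < δ / (E - 1) := by positivity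
    rw [hLdef]; linarith
  set S := 1 + ((E - 1) / δ) * (1 - p) with hSdef
  have hS1 : (1:ℝ) ≤ S := by
    have h1 : 0 ≤ ((E - 1) / δ) * (1 - p) := by
      apply mul_nonneg (by positivity); linarith
    rw [hSdef]; linarith
  have hSpos : 0 < S := lt_of_lt_of_le one_pos hS1
  have hLS : (E - 1) * (L - p) = δ * S := by
    rw [hLdef, hSdef]; field_simp; ring
  -- phase 2 induction
  have phase2 : ∀ m : ℕ, n₁ + m ≤ n₂ →
      π₀ (n₁ + m) = (1 - exp (-(m : ℝ) * ε)) * L + exp (-(m : ℝ) * ε) * p := by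
    intro m hm
    induction m with
    | zero => simp [hpdef]
    | succ m ih =>
      have hx := ih (by omega)
      have hmZ : ((m : ℤ) + 1) ≤ ⌊(1 / ε) * Real.log S⌋ := by omega
      have hmR : ((m : ℝ) + 1) ≤ (1 / ε) * Real.log S := by
        calc ((m:ℝ) + 1) = (((m:ℤ) + 1 : ℤ) : ℝ) := by push_cast; ring
        _ ≤ (⌊(1 / ε) * Real.log S⌋ : ℝ) := by exact_mod_cast hmZ
        _ ≤ _ := Int.floor_le _
      have hmlog : ((m : ℝ) + 1) * ε ≤ Real.log S := by
        have h := mul_le_mul_of_nonneg_right hmR hε.le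
        have he : 1 / ε * Real.log S * ε = Real.log S := by field_simp
        linarith
      have hSexp : exp (((m : ℝ) + 1) * ε) ≤ S := by
        rw [← Real.exp_log hSpos]
        exact exp_le_exp.mpr hmlog
      set a := exp (-(m : ℝ) * ε) with hadef
      have ha0 : 0 < a := exp_pos _
      have ha1 : a ≤ 1 := by
        rw [hadef, ← Real.exp_zero]
        apply exp_le_exp.mpr
        have hm0 : (0:ℝ) ≤ (m:ℝ) := Nat.cast_nonneg m
        nlinarith
      have hainv : a * exp ((m : ℝ) * ε) = 1 := by rw [hadef, ← exp_add]; simp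
      have hsplit : exp (((m : ℝ) + 1) * ε) = exp ((m : ℝ) * ε) * E := by
        rw [hEdef, ← exp_add]; ring_nf
      set x := π₀ (n₁ + m) with hxdef
      -- x ≤ 1 - δ
      have hem0 : 0 < exp ((m:ℝ) * ε) := exp_pos _
      have hx1δ : x ≤ 1 - δ := by
        rw [hx]
        have h1 : exp ((m:ℝ) * ε) * E ≤ S := by rw [← hsplit]; exact hSexp
        have key : exp ((m:ℝ) * ε) * δ * E ≤ (E - 1) * (L - p) := by
          rw [hLS]
          calc exp ((m:ℝ) * ε) * δ * E = δ * (exp ((m:ℝ) * ε) * E) := by ring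
          _ ≤ δ * S := mul_le_mul_of_nonneg_left h1 hδ0.le
        have key2 : δ * E ≤ a * ((E - 1) * (L - p)) := by
          have h2 := mul_le_mul_of_nonneg_left key ha0.le
          have h3 : a * (exp ((m:ℝ) * ε) * δ * E) = δ * E := by
            rw [show a * (exp ((m:ℝ) * ε) * δ * E) = (a * exp ((m:ℝ) * ε)) * (δ * E) by ring,
              hainv, one_mul]
          linarith
        have hLm : L - 1 + δ = δ * E / (E - 1) := by
          rw [hLdef]; field_simp; ring
        have h4 : L - 1 + δ ≤ a * (L - p) := by
          rw [hLm, div_le_iff₀ hEm1]; linarith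
        linarith
      -- x ≥ threshold
      have hpL : p ≤ L := by linarith
      have hxp : p ≤ x := by
        rw [hx]
        nlinarith [mul_nonneg (by linarith : (0:ℝ) ≤ 1 - a) (by linarith : (0:ℝ) ≤ L - p)]
      have hxτ : 1 - δ ≤ x * (E + 1) := by
        have h5 := mul_le_mul_of_nonneg_right hxp (by linarith : (0:ℝ) ≤ E + 1)
        linarith
      -- recurrence step: B is the min
      have hBA : 1 - exp (-ε) * (1 - x - δ) ≤ E * x + δ := by
        rw [Real.exp_neg, ← hEdef, ← sub_nonneg]
        have hid : E * x + δ - (1 - E⁻¹ * (1 - x - δ)) =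
            ((E - 1) * (x * (E + 1)) - (E - 1) * (1 - δ)) / E := by
          field_simp; ring
        rw [hid]
        apply div_nonneg _ hE0.le
        have h6 := mul_le_mul_of_nonneg_left hxτ hEm1.le
        linarith
      have hB1 : 1 - exp (-ε) * (1 - x - δ) ≤ 1 := by
        have h7 : 0 ≤ exp (-ε) * (1 - x - δ) :=
          mul_nonneg (exp_pos _).le (by linarith)
        linarith
      have hstep : π₀ (n₁ + (m + 1)) = 1 - exp (-ε) * (1 - x - δ) := by
        rw [show n₁ + (m + 1) = (n₁ + m) + 1 by ring, hrec, ← hxdef,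
          min_eq_right hBA, min_eq_left hB1]
      rw [hstep, hx]
      have hsplit2 : exp (-((m : ℝ) + 1) * ε) = a * exp (-ε) := by
        rw [hadef, ← exp_add]; ring_nf
      push_cast
      rw [hsplit2, hLdef, exp_neg, ← hEdef]
      field_simp
      ring
  -- conclude
  intro n hn1 hn2
  obtain ⟨m, hm⟩ := Nat.exists_eq_add_of_le hn1
  have hm' : n - n₁ = m := by omega
  rw [hm', hm, show n₁ + m = n₁ + m by rfl]
  exact phase2 m (by omega)
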